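/- Let K be a finite field of characteristic 2, G a finite group, and V a simple self-dual KG-module. Then any two non-zero G-invariant symmetric bilinear forms on V are KG-isometric, i.e. there is a KG-module automorphism of V carrying one form to the other. -/

import Mathlib

open QuadraticMap

variable {K : Type*} [Field K] {G : Type*} [Group G]
variable {V W : Type*} [AddCommGroup V] [Module K V] [AddCommGroup W] [Module K W]

/-- `U` is a `KG`-submodule, i.e. invariant under the representation `ρ`. -/
def IsSubrep (ρ : Representation K G V) (U : Submodule K V) : Prop :=
  ∀ g : G, ∀ v ∈ U, ρ g v ∈ U

/-- The quadratic form `Q` is `G`-invariant. -/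
def GInvariantQF (ρ : Representation K G V) (Q : QuadraticForm K V) : Prop :=
  ∀ g v, Q (ρ g v) = Q v

/-- Orthogonal complement of a submodule with respect to the polarization of `Q`. -/
def qperp (Q : QuadraticForm K V) (U : Submodule K V) : Submodule K V :=
  LinearMap.BilinForm.orthogonal Q.polarBilin U

/-- `Q` is non-degenerate: the radical of its polarization is zero. -/
def QNondeg (Q : QuadraticForm K V) : Prop :=
  LinearMap.BilinForm.Nondegenerate Q.polarBilin

/-- `(V, Q)` is metabolic: there is a `KG`-submodule `N` with `N = N^⊥` and `Q(N) = 0`. -/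
def Metabolic (ρ : Representation K G V) (Q : QuadraticForm K V) : Prop :=
  ∃ N : Submodule K V, IsSubrep ρ N ∧ N = qperp Q N ∧ ∀ v ∈ N, Q v = 0

/-- `(V, Q)` is anisotropic: `Q` does not vanish on any non-zero `KG`-submodule. -/
def AnisotropicRep (ρ : Representation K G V) (Q : QuadraticForm K V) : Prop :=
  ∀ U : Submodule K V, IsSubrep ρ U → (∀ v ∈ U, Q v = 0) → U = ⊥

/-- The product (orthogonal direct sum) of two representations. -/
def prodRep (ρ : Representation K G V) (σ : Representation K G W) :
    Representation K G (V × W) :=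
  ⟨⟨fun g => (ρ g).prodMap (σ g), by ext v <;> simp⟩, fun g h => by ext v <;> simp⟩

/-- `V` is a simple `KG`-module. -/
def SimpleRep (ρ : Representation K G V) : Prop :=
  Nontrivial V ∧ ∀ U : Submodule K V, IsSubrep ρ U → U = ⊥ ∨ U = ⊤

/-- `V` is a self-dual `KG`-module. -/
def SelfDualRep (ρ : Representation K G V) : Prop :=
  ∃ f : V ≃ₗ[K] Module.Dual K V, ∀ g v, f (ρ g v) = ρ.dual g (f v)

/-- Number theory key lemma: if `n` is odd and `n ∣ b * (t - 1)` then the linear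
congruence `a * (t + 1) ≡ b [MOD n]` is solvable. -/
lemma stmt9_keyNum (n t b : ℤ) (hodd : Odd n) (h : n ∣ b * (t - 1)) :
    ∃ a : ℤ, n ∣ a * (t + 1) - b := by
  set d : ℤ := (Int.gcd (t + 1) n : ℤ) with hd
  have hdt : d ∣ t + 1 := Int.gcd_dvd_left _ _
  have hdn : d ∣ n := Int.gcd_dvd_right _ _
  have h1 : d ∣ b * (t - 1) := hdn.trans h
  have h2 : d ∣ b * (t + 1) := Dvd.dvd.mul_left hdt b
  have h3 : d ∣ 2 * b := by
    have he : 2 * b = b * (t + 1) - b * (t - 1) := by ring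
    rw [he]; exact dvd_sub h2 h1
  have h2d : ¬ (2 : ℤ) ∣ d := by
    intro h2d
    have : (2 : ℤ) ∣ n := h2d.trans hdn
    obtain ⟨k, hk⟩ := this
    exact (Int.not_odd_iff_even.mpr ⟨k, by omega⟩) hodd
  have hcop : IsCoprime (2 : ℤ) d := (Int.prime_two.irreducible.coprime_iff_not_dvd).mpr h2d
  have hdb : d ∣ b := hcop.symm.dvd_of_dvd_mul_left h3
  obtain ⟨k, hk⟩ := hdb
  have hbez : d = (t + 1) * Int.gcdA (t + 1) n + n * Int.gcdB (t + 1) n := Int.gcd_eq_gcd_ab _ _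
  refine ⟨k * Int.gcdA (t + 1) n, ⟨-(Int.gcdB (t + 1) n * k), ?_⟩⟩
  rw [hk, hbez]; ring

/-- The commutant algebra of a representation. -/
def stmt9_comm (ρ : Representation K G V) : Subalgebra K (Module.End K V) where
  carrier := {f | ∀ g v, f (ρ g v) = ρ g (f v)}
  mul_mem' := by
    intro a b ha hb g v
    show a (b (ρ g v)) = ρ g (a (b v))
    rw [hb g v, ha g (b v)]
  add_mem' := by
    intro a b ha hb g v
    show a (ρ g v) + b (ρ g v) = ρ g (a v + b v)
    rw [ha g v, hb g v, _root_.map_add]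
  one_mem' := by intro g v; simp
  algebraMap_mem' := by
    intro c g v
    simp [Module.algebraMap_end_apply]

/-- Schur: a nonzero equivariant endomorphism of a simple module is bijective. -/
lemma stmt9_schur [FiniteDimensional K V] (ρ : Representation K G V)
    (hsimple : SimpleRep ρ) (f : Module.End K V)
    (hf : ∀ g v, f (ρ g v) = ρ g (f v)) (h0 : f ≠ 0) : Function.Bijective f := by
  have hker : IsSubrep ρ (LinearMap.ker f) := by
    intro g v hv
    rw [LinearMap.mem_ker] at *
    rw [hf, hv, map_zero]
  rcases hsimple.2 _ hker with h | h
  · have hinj : Function.Injective f := LinearMap.ker_eq_bot.mp h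
    exact ⟨hinj, LinearMap.injective_iff_surjective.mp hinj⟩
  · exact absurd (LinearMap.ker_eq_top.mp h) h0

/-- An invariant nonzero bilinear form on a simple module is nondegenerate. -/
lemma stmt9_nondeg [FiniteDimensional K V] (ρ : Representation K G V) (hsimple : SimpleRep ρ)
    (B : LinearMap.BilinForm K V) (hB : B ≠ 0)
    (hBinv : ∀ g v w, B (ρ g v) (ρ g w) = B v w) : B.Nondegenerate := by
  have hker : IsSubrep ρ (LinearMap.ker B) := by
    intro g v hv
    rw [LinearMap.mem_ker] at *
    ext w
    have hw : ρ g (ρ g⁻¹ w) = w := by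
      have : ρ g * ρ g⁻¹ = 1 := by rw [← map_mul, mul_inv_cancel, map_one]
      exact congrFun (congrArg (fun h => h.toFun) this) w
    calc B (ρ g v) w = B (ρ g v) (ρ g (ρ g⁻¹ w)) := by rw [hw]
      _ = B v (ρ g⁻¹ w) := hBinv g v _
      _ = 0 := by rw [hv]; rfl
  rcases hsimple.2 _ hker with h | h
  · refine LinearMap.BilinForm.Nondegenerate.ofSeparatingLeft ?_
    intro v hv
    have : v ∈ LinearMap.ker B := by
      rw [LinearMap.mem_ker]; ext w; exact hv w
    rw [h] at this; exact this
  · exfalso; apply hB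
    ext v w
    have : v ∈ LinearMap.ker B := by rw [h]; trivial
    rw [LinearMap.mem_ker] at this
    simp [this]

set_option maxHeartbeats 2000000 in
/-- over a finite field of characteristic 2, any two non-zero `G`-invariant
symmetric bilinear forms on a simple self-dual `KG`-module are `KG`-isometric. -/
theorem stmt9 [Fintype K] (h2 : ringChar K = 2) [Finite G] [FiniteDimensional K V]
    (ρ : Representation K G V) (hsimple : SimpleRep ρ) (hsd : SelfDualRep ρ)
    (B B' : LinearMap.BilinForm K V) (hB : B ≠ 0) (hB' : B' ≠ 0)
    (hsymm : ∀ v w, B v w = B w v) (hsymm' : ∀ v w, B' v w = B' w v)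
    (hBinv : ∀ g v w, B (ρ g v) (ρ g w) = B v w)
    (hB'inv : ∀ g v w, B' (ρ g v) (ρ g w) = B' v w) :
    ∃ e : V ≃ₗ[K] V, (∀ g v, e (ρ g v) = ρ g (e v)) ∧ ∀ v w, B' (e v) (e w) = B v w := by
  classical
  -- nondegeneracy
  have hB'nd : B'.Nondegenerate := stmt9_nondeg ρ hsimple B' hB' hB'inv
  -- inverses of ρ
  have hρinv : ∀ (g : G) (w : V), ρ g (ρ g⁻¹ w) = w := by
    intro g w
    have : ρ g * ρ g⁻¹ = 1 := by rw [← map_mul, mul_inv_cancel, map_one]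
    exact congrFun (congrArg (fun h => h.toFun) this) w
  have hB'g : ∀ (g : G) (v w : V), B' (ρ g v) w = B' v (ρ g⁻¹ w) := by
    intro g v w
    conv_lhs => rw [← hρinv g w]
    exact hB'inv g v _
  have hBg : ∀ (g : G) (v w : V), B (ρ g v) w = B v (ρ g⁻¹ w) := by
    intro g v w
    conv_lhs => rw [← hρinv g w]
    exact hBinv g v _
  -- the duality equivalence for B'
  set D : V ≃ₗ[K] Module.Dual K V := B'.toDual hB'nd with hDdef
  have hD : ∀ x w, D x w = B' x w := fun x w => LinearMap.BilinForm.toDual_def hB'nd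
  have huniq : ∀ x y : V, (∀ w, B' x w = B' y w) → x = y := by
    intro x y h
    have h0 : ∀ w, B' (x - y) w = 0 := by
      intro w; rw [_root_.map_sub, LinearMap.sub_apply, h, sub_self]
    have := hB'nd.1 (x - y) h0
    rwa [sub_eq_zero] at this
  -- the adjoint operation w.r.t. B'
  set adj : Module.End K V → Module.End K V :=
    fun f => D.symm.toLinearMap ∘ₗ f.dualMap ∘ₗ D.toLinearMap with hadjdef
  have hadj : ∀ (f : Module.End K V) (v w : V), B' (adj f v) w = B' v (f w) := by
    intro f v w
    have : D (adj f v) = f.dualMap (D v) := by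
      simp only [hadjdef, LinearMap.comp_apply, LinearEquiv.coe_toLinearMap,
        LinearEquiv.apply_symm_apply]
    calc B' (adj f v) w = D (adj f v) w := (hD _ _).symm
      _ = f.dualMap (D v) w := by rw [this]
      _ = D v (f w) := rfl
      _ = B' v (f w) := hD _ _
  -- the commutant algebra
  set S : Subalgebra K (Module.End K V) := stmt9_comm ρ with hSdef
  have hmemS : ∀ f : Module.End K V, f ∈ S ↔ ∀ g v, f (ρ g v) = ρ g (f v) := fun f => Iff.rfl
  have hadjmem : ∀ f : Module.End K V, f ∈ S → adj f ∈ S := by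
    intro f hf g v
    apply huniq
    intro w
    calc B' (adj f (ρ g v)) w = B' (ρ g v) (f w) := hadj f _ w
      _ = B' v (ρ g⁻¹ (f w)) := hB'g g v _
      _ = B' v (f (ρ g⁻¹ w)) := by rw [(hmemS f).mp hf g⁻¹ w]
      _ = B' (adj f v) (ρ g⁻¹ w) := (hadj f v _).symm
      _ = B' (ρ g (adj f v)) (ρ g (ρ g⁻¹ w)) := (hB'inv g _ _).symm
      _ = B' (ρ g (adj f v)) w := by rw [hρinv]
  -- the intertwiner φ with B' (φ v) w = B v w
  set φ : Module.End K V := D.symm.toLinearMap ∘ₗ B with hφdef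
  have hφ : ∀ v w, B' (φ v) w = B v w := by
    intro v w
    have : D (φ v) = B v := by
      simp only [hφdef, LinearMap.comp_apply, LinearEquiv.coe_toLinearMap,
        LinearEquiv.apply_symm_apply]
    calc B' (φ v) w = D (φ v) w := (hD _ _).symm
      _ = B v w := by rw [this]
  have hφmem : φ ∈ S := by
    intro g v
    apply huniq
    intro w
    calc B' (φ (ρ g v)) w = B (ρ g v) w := hφ _ w
      _ = B v (ρ g⁻¹ w) := hBg g v w
      _ = B' (φ v) (ρ g⁻¹ w) := (hφ v _).symm
      _ = B' (ρ g (φ v)) (ρ g (ρ g⁻¹ w)) := (hB'inv g _ _).symm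
      _ = B' (ρ g (φ v)) w := by rw [hρinv]
  have hφ0 : φ ≠ 0 := by
    intro h
    apply hB
    ext v w
    have := hφ v w
    rw [h] at this
    simpa using this.symm
  have hadjφ : adj φ = φ := by
    ext v
    apply huniq
    intro w
    calc B' (adj φ v) w = B' v (φ w) := hadj φ v w
      _ = B' (φ w) v := hsymm' v _
      _ = B w v := hφ w v
      _ = B v w := hsymm w v
      _ = B' (φ v) w := (hφ v w).symm
  -- S is a finite field
  have hVfin : Finite V := Module.finite_of_finite K
  have hEndfin : Finite (Module.End K V) :=
    Finite.of_injective (fun f => (f : V → V)) (fun f g h => LinearMap.coe_injective h)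
  letI : Finite S := Finite.of_injective (fun f : S => (f : Module.End K V)) Subtype.coe_injective
  haveI : Nontrivial V := hsimple.1
  letI : Nontrivial S := by
    refine ⟨1, 0, ?_⟩
    intro h
    obtain ⟨v, hv⟩ := exists_ne (0 : V)
    apply hv
    have := congrArg Subtype.val h
    calc v = (1 : Module.End K V) v := rfl
      _ = ((1 : S) : Module.End K V) v := rfl
      _ = ((0 : S) : Module.End K V) v := by rw [this]
      _ = 0 := rfl
  letI : NoZeroDivisors S := by
    refine ⟨fun {a b} hab => ?_⟩
    by_cases ha : a = 0
    · exact Or.inl ha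
    · right
      have ha' : (a : Module.End K V) ≠ 0 := fun h => ha (Subtype.ext h)
      have hbij := stmt9_schur ρ hsimple a ((hmemS _).mp a.2) ha'
      apply Subtype.ext
      ext v
      apply hbij.1
      have := congrArg Subtype.val hab
      have : (a : Module.End K V) * (b : Module.End K V) = 0 := by
        rw [← MulMemClass.coe_mul, hab]; rfl
      calc (a : Module.End K V) ((b : Module.End K V) v)
          = ((a : Module.End K V) * (b : Module.End K V)) v := rfl
        _ = (0 : Module.End K V) v := by rw [this]
        _ = (a : Module.End K V) ((0 : Module.End K V) v) := by simp
      -- `(0:S).val v = 0`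
  letI : IsDomain S := NoZeroDivisors.to_isDomain S
  letI : Fintype S := Fintype.ofFinite S
  letI : DivisionRing S := Fintype.divisionRingOfIsDomain S
  letI : Field S := littleWedderburn S
  -- the adjoint involution as a ring hom on S
  have hadjmul : ∀ f g : Module.End K V, adj (f * g) = adj g * adj f := by
    intro f g
    ext v
    apply huniq
    intro w
    calc B' (adj (f * g) v) w = B' v (f (g w)) := hadj _ v w
      _ = B' (adj f v) (g w) := (hadj f v _).symm
      _ = B' (adj g (adj f v)) w := (hadj g _ w).symm
      _ = B' ((adj g * adj f) v) w := rfl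
  have hadjadd : ∀ f g : Module.End K V, adj (f + g) = adj f + adj g := by
    intro f g
    ext v
    apply huniq
    intro w
    calc B' (adj (f + g) v) w = B' v (f w + g w) := hadj _ v w
      _ = B' v (f w) + B' v (g w) := by rw [_root_.map_add]
      _ = B' (adj f v) w + B' (adj g v) w := by rw [hadj, hadj]
      _ = B' (adj f v + adj g v) w := by rw [_root_.map_add, LinearMap.add_apply]
      _ = B' ((adj f + adj g) v) w := rfl
  have hadjone : adj 1 = 1 := by
    ext v
    apply huniq
    intro w
    calc B' (adj 1 v) w = B' v w := hadj 1 v w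
      _ = B' ((1 : Module.End K V) v) w := rfl
  set σ : S →+* S :=
    { toFun := fun f => ⟨adj f.1, hadjmem _ f.2⟩
      map_one' := Subtype.ext (by simpa using hadjone)
      map_mul' := by
        intro f g
        apply Subtype.ext
        calc (adj ((f * g : S) : Module.End K V))
            = adj (f.1 * g.1) := by rw [MulMemClass.coe_mul]
          _ = adj g.1 * adj f.1 := hadjmul f.1 g.1
          _ = ((⟨adj g.1, hadjmem _ g.2⟩ * ⟨adj f.1, hadjmem _ f.2⟩ : S) : Module.End K V) := rfl
          _ = ((⟨adj f.1, hadjmem _ f.2⟩ * ⟨adj g.1, hadjmem _ g.2⟩ : S) : Module.End K V) :=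
              congrArg Subtype.val (mul_comm _ _)
      map_zero' := by
        apply Subtype.ext
        have : adj (0 : Module.End K V) = 0 := by
          ext v
          apply huniq
          intro w
          simp [hadj]
        simpa using this
      map_add' := by
        intro f g
        apply Subtype.ext
        have : adj ((f + g : S) : Module.End K V) = adj f.1 + adj g.1 := by
          rw [AddMemClass.coe_add]; exact hadjadd f.1 g.1
        simpa using this } with hσdef
  have hσval : ∀ f : S, (σ f : Module.End K V) = adj f.1 := fun f => rfl
  -- φ as an element of S
  set φS : S := ⟨φ, hφmem⟩ with hφSdef
  have hφS0 : φS ≠ 0 := fun h => hφ0 (congrArg Subtype.val h)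
  have hσφ : σ φS = φS := Subtype.ext (by rw [hσval]; exact hadjφ)
  -- cardinality: |Sˣ| is odd
  haveI : CharP K 2 := by rw [← h2]; exact ringChar.charP K
  haveI : CharP S 2 := charP_of_injective_ringHom (algebraMap K S).injective 2
  obtain ⟨m, hm2, hcardS⟩ := FiniteField.card S 2
  have hcardU : Nat.card Sˣ = 2 ^ (m : ℕ) - 1 := by
    rw [Nat.card_units, Nat.card_eq_fintype_card, hcardS]
  have hoddU : Odd (Nat.card Sˣ) := by
    rw [hcardU]
    refine Nat.Even.sub_odd (Nat.one_le_two_pow) ?_ odd_one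
    exact (Nat.even_pow' (by exact_mod_cast m.ne_zero)).mpr even_two
  -- cyclic group argument
  obtain ⟨g, hg⟩ := IsCyclic.exists_generator (α := Sˣ)
  have hord : orderOf g = Nat.card Sˣ := orderOf_eq_card_of_forall_mem_zpowers hg
  set σu : Sˣ →* Sˣ := Units.map σ.toMonoidHom with hσudef
  obtain ⟨t, ht⟩ := Subgroup.mem_zpowers_iff.mp (hg (σu g))
  set u : Sˣ := Units.mk0 φS hφS0 with hudef
  obtain ⟨b, hb⟩ := Subgroup.mem_zpowers_iff.mp (hg u)
  have hσuu : σu u = u := by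
    apply Units.ext
    rw [hσudef]
    calc ((Units.map σ.toMonoidHom u : Sˣ) : S) = σ.toMonoidHom (u : S) := Units.coe_map _ _
      _ = σ φS := rfl
      _ = φS := hσφ
      _ = (u : S) := rfl
  have hσug : ∀ k : ℤ, σu (g ^ k) = g ^ (t * k) := by
    intro k
    rw [map_zpow, ← ht, ← zpow_mul]
  have hoddOrd : Odd (orderOf g) := by rw [hord]; exact hoddU
  have hdvd1 : ((orderOf g : ℕ) : ℤ) ∣ b * (t - 1) := by
    rw [orderOf_dvd_iff_zpow_eq_one]
    have h1 : g ^ (t * b) = g ^ b := by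
      rw [← hσug b, hb, hσuu]
    have he : b * (t - 1) = t * b - b := by ring
    rw [he, zpow_sub, h1, mul_inv_cancel]
  obtain ⟨a, ha⟩ := stmt9_keyNum (orderOf g) t b
    (by exact_mod_cast hoddOrd) hdvd1
  -- the square root c
  set c : Sˣ := g ^ a with hcdef
  have hc : σu c * c = u := by
    have h1 : g ^ (a * (t + 1) - b) = 1 := orderOf_dvd_iff_zpow_eq_one.mp ha
    rw [hcdef, hσug a, ← zpow_add, ← hb]
    calc g ^ (t * a + a) = g ^ (b + (a * (t + 1) - b)) := by ring_nf
      _ = g ^ b * g ^ (a * (t + 1) - b) := by rw [zpow_add]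
      _ = g ^ b := by rw [h1, mul_one]
  -- transfer back
  set cE : Module.End K V := ((c : S) : Module.End K V) with hcEdef
  have hcmem : cE ∈ S := (c : S).2
  have hcE0 : cE ≠ 0 := by
    intro h
    exact Units.ne_zero c (Subtype.ext h)
  have hceq : adj cE * cE = φ := by
    have h1 : σ (c : S) * (c : S) = φS := by
      calc σ (c : S) * (c : S) = ((σu c : Sˣ) : S) * ((c : Sˣ) : S) := rfl
        _ = ((σu c * c : Sˣ) : S) := by rw [Units.val_mul]
        _ = ((u : Sˣ) : S) := by rw [hc]
        _ = φS := rfl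
    have := congrArg Subtype.val h1
    rwa [MulMemClass.coe_mul, hσval] at this
  have hbij := stmt9_schur ρ hsimple cE ((hmemS _).mp hcmem) hcE0
  refine ⟨LinearEquiv.ofBijective cE hbij, ?_, ?_⟩
  · intro g' v
    exact (hmemS _).mp hcmem g' v
  · intro v w
    have : B' (cE v) (cE w) = B v w := by
      calc B' (cE v) (cE w) = B' (adj cE (cE v)) w := by
            rw [hsymm' (cE v) (cE w)]
            rw [hadj]
            exact hsymm' _ _
        _ = B' ((adj cE * cE) v) w := rfl
        _ = B' (φ v) w := by rw [hceq]
        _ = B v w := hφ v w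
    exact this
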